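/- Let A be a commutative ring, S a multiplicatively closed subset of A, and Q an ideal of A with Q ∩ S = ∅. If Q is a weakly S-primary ideal of A and I is an ideal of A with I ∩ S ≠ ∅, then the product ideal I*Q is a weakly S-primary ideal of A (and (I*Q) ∩ S = ∅). -/

import Mathlib

/-- An ideal `Q` of a commutative ring `A` (disjoint from `S`) is *weakly `S`-primary*
if there exists `s ∈ S` such that for all `x y : A`, if `x*y ∈ Q` and `x*y ≠ 0`,
then `s*x ∈ Q` or `s*y ∈ rad(Q)`. -/
def WeaklySPrimary {A : Type*} [CommRing A] (S : Set A) (Q : Ideal A) : Prop :=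
  ∃ s ∈ S, ∀ x y : A, x * y ∈ Q → x * y ≠ 0 → s * x ∈ Q ∨ s * y ∈ Q.radical

theorem weaklySPrimary_mul {A : Type*} [CommRing A] (S : Set A)
    (hS : ∀ a ∈ S, ∀ b ∈ S, a * b ∈ S) (Q I : Ideal A)
    (hQS : (Q : Set A) ∩ S = ∅)
    (hQ : WeaklySPrimary S Q) (hI : ((I : Set A) ∩ S).Nonempty) :
    WeaklySPrimary S (I * Q) ∧ ((I * Q : Ideal A) : Set A) ∩ S = ∅ := by
  obtain ⟨s, hsS, hs⟩ := hQ
  obtain ⟨t, htI, htS⟩ := hI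
  have hIQQ : I * Q ≤ Q := Ideal.mul_le_right
  constructor
  · refine ⟨s * t, hS s hsS t htS, fun x y hxy hxy0 => ?_⟩
    rcases hs x y (hIQQ hxy) hxy0 with h | h
    · left
      have : t * (s * x) ∈ I * Q := Ideal.mul_mem_mul htI h
      convert this using 1; ring
    · right
      obtain ⟨n, hn⟩ := h
      rcases Nat.eq_zero_or_pos n with rfl | hn0
      · exfalso
        simp only [pow_zero] at hn
        have hs1 : s ∈ Q := by simpa using Q.mul_mem_left s hn
        have : s ∈ (Q : Set A) ∩ S := ⟨hs1, hsS⟩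
        rw [hQS] at this; exact this
      · refine ⟨n, ?_⟩
        have : t ^ n * (s * y) ^ n ∈ I * Q := Ideal.mul_mem_mul (Ideal.pow_mem_of_mem I htI n hn0) hn
        convert this using 1; ring
  · apply Set.eq_empty_of_subset_empty
    rw [← hQS]
    exact Set.inter_subset_inter_left S hIQQ
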